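/- arXiv:1312.5792 — 4 statements merged into one kernel-verified Lean document; each statement's English description precedes it below -/
import Mathlib

section
/- Let A be a real d×d matrix, C a real c×c matrix, B a real d×c matrix, and h ≥ 0. Then the matrix exponential of h times the block upper-triangular matrix [[A, B], [0, C]] equals the block matrix [[exp(hA), ∫₀ʰ exp(A(h−s)) B exp(Cs) ds], [0, exp(hC)]]. -/
open Matrix MeasureTheory intervalIntegral
open scoped Matrix.Norms.L2Operator

section VanLoanAux

open NormedSpace

/-- Matrix multiplication of (possibly rectangular) real matrices, bundled as a continuous
bilinear map for the L2 operator norm topology. -/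
noncomputable def vanLoanMulCLM (m n p : ℕ) :
    Matrix (Fin m) (Fin n) ℝ →L[ℝ] Matrix (Fin n) (Fin p) ℝ →L[ℝ] Matrix (Fin m) (Fin p) ℝ :=
  LinearMap.toContinuousLinearMap
  { toFun := fun X => LinearMap.toContinuousLinearMap
      { toFun := fun Y => X * Y
        map_add' := fun Y Z => Matrix.mul_add X Y Z
        map_smul' := fun r Y => Matrix.mul_smul X r Y }
    map_add' := fun X Z => by ext Y : 1; simp [Matrix.add_mul]
    map_smul' := fun r X => by ext Y : 1; simp [Matrix.smul_mul] }

@[simp] lemma vanLoanMulCLM_apply {m n p : ℕ} (X : Matrix (Fin m) (Fin n) ℝ)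
    (Y : Matrix (Fin n) (Fin p) ℝ) : vanLoanMulCLM m n p X Y = X * Y := rfl

/-- Product rule for products of (possibly rectangular) matrix-valued functions. -/
lemma HasDerivAt.vanLoanMatmul {m n p : ℕ} {f : ℝ → Matrix (Fin m) (Fin n) ℝ}
    {g : ℝ → Matrix (Fin n) (Fin p) ℝ} {f' : Matrix (Fin m) (Fin n) ℝ}
    {g' : Matrix (Fin n) (Fin p) ℝ} {t : ℝ}
    (hf : HasDerivAt f f' t) (hg : HasDerivAt g g' t) :
    HasDerivAt (fun t => f t * g t) (f' * g t + f t * g') t := by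
  have hf' : ∀ i j, HasDerivAt (fun t => f t i j) (f' i j) t := fun i j =>
    hasDerivAt_pi.1 (hasDerivAt_pi.1 hf i) j
  have hg' : ∀ i j, HasDerivAt (fun t => g t i j) (g' i j) t := fun i j =>
    hasDerivAt_pi.1 (hasDerivAt_pi.1 hg i) j
  refine hasDerivAt_pi.2 fun i => hasDerivAt_pi.2 fun k => ?_
  simp only [Matrix.mul_apply, Matrix.add_apply]
  rw [← Finset.sum_add_distrib]
  exact HasDerivAt.fun_sum fun j _ => (hf' i j).mul (hg' j k)

/-- Building an upper block-triangular matrix, as a continuous linear map in the three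
nonzero blocks. -/
noncomputable def vanLoanBlkCLM (d c : ℕ) :
    (Matrix (Fin d) (Fin d) ℝ × Matrix (Fin d) (Fin c) ℝ × Matrix (Fin c) (Fin c) ℝ)
      →L[ℝ] Matrix (Fin d ⊕ Fin c) (Fin d ⊕ Fin c) ℝ :=
  LinearMap.toContinuousLinearMap
  { toFun := fun p => Matrix.fromBlocks p.1 p.2.1 0 p.2.2
    map_add' := fun p q => by simp [Matrix.fromBlocks_add]
    map_smul' := fun r p => by simp [Matrix.fromBlocks_smul] }

@[simp] lemma vanLoanBlkCLM_apply {d c : ℕ}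
    (p : Matrix (Fin d) (Fin d) ℝ × Matrix (Fin d) (Fin c) ℝ × Matrix (Fin c) (Fin c) ℝ) :
    vanLoanBlkCLM d c p = Matrix.fromBlocks p.1 p.2.1 0 p.2.2 := rfl

end VanLoanAux

open NormedSpace

noncomputable instance vanLoanRatNormedAlgebra (ι : Type*) [Fintype ι] [DecidableEq ι] :
    NormedAlgebra ℚ (Matrix ι ι ℝ) :=
  NormedAlgebra.restrictScalars ℚ ℝ _

/-- **Van Loan block-exponential identity.**  For a real `d × d` matrix `A`, a real `c × c`
matrix `C`, a real `d × c` matrix `B` and `h ≥ 0`, the matrix exponential of `h` times the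
block upper-triangular matrix `[[A, B], [0, C]]` equals the block matrix
`[[exp (h A), ∫₀ʰ exp (A (h − s)) B exp (C s) ds], [0, exp (h C)]]`. -/
theorem van_loan_block_exponential (d c : ℕ)
    (A : Matrix (Fin d) (Fin d) ℝ) (C : Matrix (Fin c) (Fin c) ℝ)
    (B : Matrix (Fin d) (Fin c) ℝ) (h : ℝ) (hh : 0 ≤ h) :
    NormedSpace.exp (h • Matrix.fromBlocks A B 0 C) =
      Matrix.fromBlocks
        (NormedSpace.exp (h • A))
        (∫ s in (0:ℝ)..h,
          NormedSpace.exp ((h - s) • A) * B * NormedSpace.exp (s • C))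
        0
        (NormedSpace.exp (h • C)) := by
  set M : Matrix (Fin d ⊕ Fin c) (Fin d ⊕ Fin c) ℝ := Matrix.fromBlocks A B 0 C with hMdef
  -- the candidate integrand and its running integral
  set f : ℝ → Matrix (Fin d) (Fin c) ℝ :=
    fun s => exp ((-s) • A) * B * exp (s • C) with hfdef
  have hcont : Continuous f := by
    apply Continuous.matrix_mul
    apply Continuous.matrix_mul
    · exact exp_continuous.comp (continuous_neg.smul continuous_const)
    · exact continuous_const
    · exact exp_continuous.comp (continuous_id.smul continuous_const)
  set V : ℝ → Matrix (Fin d) (Fin c) ℝ := fun u => ∫ s in (0:ℝ)..u, f s with hVdef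
  have hV : ∀ t : ℝ, HasDerivAt V (f t) t := fun t =>
    intervalIntegral.integral_hasDerivAt_right (hcont.intervalIntegrable 0 t)
      hcont.stronglyMeasurable.stronglyMeasurableAtFilter hcont.continuousAt
  -- the candidate solution
  set F : ℝ → Matrix (Fin d ⊕ Fin c) (Fin d ⊕ Fin c) ℝ :=
    fun t => Matrix.fromBlocks (exp (t • A)) (exp (t • A) * V t) 0 (exp (t • C))
    with hFdef
  -- cancellation lemma
  have hone : ∀ t : ℝ, exp (t • A) * exp ((-t) • A) = 1 := fun t => by
    rw [← NormedSpace.exp_add_of_commute (((Commute.refl A).smul_left t).smul_right (-t)), ← add_smul]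
    simp
  -- F solves F' = M * F
  have hF : ∀ t : ℝ, HasDerivAt F (M * F t) t := by
    intro t
    have hX : HasDerivAt (fun u : ℝ => exp (u • A)) (A * exp (t • A)) t :=
      hasDerivAt_exp_smul_const' A t
    have hZ : HasDerivAt (fun u : ℝ => exp (u • C)) (C * exp (t • C)) t :=
      hasDerivAt_exp_smul_const' C t
    have hY : HasDerivAt (fun u : ℝ => exp (u • A) * V u)
        (A * (exp (t • A) * V t) + B * exp (t • C)) t := by
      have hd := hX.vanLoanMatmul (hV t)
      have h2 : exp (t • A) * f t = B * exp (t • C) := by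
        rw [hfdef]
        rw [← Matrix.mul_assoc, ← Matrix.mul_assoc, hone t, Matrix.one_mul]
      have heq : A * exp (t • A) * V t + exp (t • A) * f t
          = A * (exp (t • A) * V t) + B * exp (t • C) := by
        rw [Matrix.mul_assoc, h2]
      rw [← heq]
      exact hd
    have htrip := HasFDerivAt.comp_hasDerivAt t
      (ContinuousLinearMap.hasFDerivAt (vanLoanBlkCLM d c)) (hX.prodMk (hY.prodMk hZ))
    have hFt : (fun u : ℝ => vanLoanBlkCLM d c
        (exp (u • A), exp (u • A) * V u, exp (u • C))) = F := by
      funext u; simp [hFdef]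
    have hval : vanLoanBlkCLM d c
        (A * exp (t • A), A * (exp (t • A) * V t) + B * exp (t • C), C * exp (t • C))
        = M * F t := by
      simp only [vanLoanBlkCLM_apply, hMdef, hFdef, Matrix.fromBlocks_multiply]
      simp
    have h3 : HasDerivAt F (vanLoanBlkCLM d c
        (A * exp (t • A), A * (exp (t • A) * V t) + B * exp (t • C),
          C * exp (t • C))) t := by
      rw [← hFt]; exact htrip
    exact hval ▸ h3
  -- G := exp (t • (-M)) * F t is constant
  set G : ℝ → Matrix (Fin d ⊕ Fin c) (Fin d ⊕ Fin c) ℝ :=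
    fun t => exp (t • (-M)) * F t with hGdef
  have hG : ∀ t : ℝ, HasDerivAt G 0 t := by
    intro t
    have hE : HasDerivAt (fun u : ℝ => exp (u • (-M))) ((-M) * exp (t • (-M))) t :=
      hasDerivAt_exp_smul_const' (-M) t
    have := hE.mul (hF t)
    have hcomm : M * exp (t • (-M)) = exp (t • (-M)) * M :=
      ((((Commute.refl M).neg_right).smul_right t).exp_right).eq
    have hzero : (-M) * exp (t • (-M)) * F t + exp (t • (-M)) * (M * F t) = 0 := by
      rw [neg_mul, hcomm, neg_mul, Matrix.mul_assoc]
      exact neg_add_cancel _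
    rw [← hzero]
    exact this
  have hGconst : G h = G 0 :=
    is_const_of_deriv_eq_zero (fun t => (hG t).differentiableAt) (fun t => (hG t).deriv) h 0
  have hG0 : G 0 = 1 := by
    simp [hGdef, hFdef, hVdef, exp_zero, Matrix.fromBlocks_one]
  -- conclude F h = exp (h • M)
  have hFh : F h = exp (h • M) := by
    have h1 : exp (h • (-M)) * F h = 1 := hGconst.trans hG0
    have h2 : exp (h • M) * exp (h • (-M)) = 1 := by
      rw [← NormedSpace.exp_add_of_commute ((((Commute.refl M).neg_right).smul_left h).smul_right h),
        ← smul_add]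
      simp
    calc F h = (exp (h • M) * exp (h • (-M))) * F h := by rw [h2, Matrix.one_mul]
      _ = exp (h • M) * (exp (h • (-M)) * F h) := by rw [Matrix.mul_assoc]
      _ = exp (h • M) := by rw [h1, Matrix.mul_one]
  -- identify the upper-right block with the stated integral
  have hint : exp (h • A) * V h
      = ∫ s in (0:ℝ)..h, exp ((h - s) • A) * B * exp (s • C) := by
    have hi : IntervalIntegrable f volume 0 h := hcont.intervalIntegrable 0 h
    have key := (vanLoanMulCLM d d c (exp (h • A))).intervalIntegral_comp_comm hi
    simp only [vanLoanMulCLM_apply] at key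
    rw [hVdef, ← key]
    refine intervalIntegral.integral_congr fun s _ => ?_
    rw [hfdef]
    rw [← Matrix.mul_assoc, ← Matrix.mul_assoc,
      ← NormedSpace.exp_add_of_commute (((Commute.refl A).smul_left h).smul_right (-s)), ← add_smul]
    ring_nf
  rw [← hFh, ← hint]
end

section
/- Let A be a real d×d matrix, G a real d×m matrix, and h ≥ 0. Define Σ(h) = ∫₀ʰ exp(A(h−s)) G Gᵀ exp(Aᵀ(h−s)) ds, and let D = exp(h·[[A, GGᵀ], [0, −Aᵀ]]) be the exponential of the indicated 2d×2d block matrix, with D₁₁ and D₁₂ its d×d blocks in the first block row. Then Σ(h) = (∫₀ʰ exp(A(h−s)) G Gᵀ exp(−Aᵀ s) ds) · exp(Aᵀ h) and Σ(h) = D₁₂ · D₁₁ᵀ. -/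
open Matrix MeasureTheory intervalIntegral
open scoped Matrix.Norms.L2Operator

noncomputable instance instNormedAlgebraRatMatrixReal {n : Type*} [Fintype n] [DecidableEq n] :
    NormedAlgebra ℚ (Matrix n n ℝ) :=
  { norm_smul_le := fun q A => by
      rw [← Rat.cast_smul_eq_qsmul ℝ q A]
      exact (norm_smul_le (q : ℝ) A).trans (by rw [Rat.norm_cast_real]) }

namespace VanLoanAux

variable {d : ℕ}

/-- Embedding of the (1,1) block as a continuous linear map. -/
noncomputable def L11 (d : ℕ) :
    Matrix (Fin d) (Fin d) ℝ →L[ℝ] Matrix (Fin d ⊕ Fin d) (Fin d ⊕ Fin d) ℝ :=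
  LinearMap.toContinuousLinearMap
    { toFun := fun X => Matrix.fromBlocks X 0 0 0
      map_add' := fun X Y => by rw [Matrix.fromBlocks_add]; simp
      map_smul' := fun r X => by simp only [RingHom.id_apply]; rw [Matrix.fromBlocks_smul]; simp }

/-- Embedding of the (1,2) block as a continuous linear map. -/
noncomputable def L12 (d : ℕ) :
    Matrix (Fin d) (Fin d) ℝ →L[ℝ] Matrix (Fin d ⊕ Fin d) (Fin d ⊕ Fin d) ℝ :=
  LinearMap.toContinuousLinearMap
    { toFun := fun X => Matrix.fromBlocks 0 X 0 0
      map_add' := fun X Y => by rw [Matrix.fromBlocks_add]; simp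
      map_smul' := fun r X => by simp only [RingHom.id_apply]; rw [Matrix.fromBlocks_smul]; simp }

/-- Embedding of the (2,2) block as a continuous linear map. -/
noncomputable def L22 (d : ℕ) :
    Matrix (Fin d) (Fin d) ℝ →L[ℝ] Matrix (Fin d ⊕ Fin d) (Fin d ⊕ Fin d) ℝ :=
  LinearMap.toContinuousLinearMap
    { toFun := fun X => Matrix.fromBlocks 0 0 0 X
      map_add' := fun X Y => by rw [Matrix.fromBlocks_add]; simp
      map_smul' := fun r X => by simp only [RingHom.id_apply]; rw [Matrix.fromBlocks_smul]; simp }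

@[simp] lemma L11_apply (X : Matrix (Fin d) (Fin d) ℝ) :
    L11 d X = Matrix.fromBlocks X 0 0 0 := rfl
@[simp] lemma L12_apply (X : Matrix (Fin d) (Fin d) ℝ) :
    L12 d X = Matrix.fromBlocks 0 X 0 0 := rfl
@[simp] lemma L22_apply (X : Matrix (Fin d) (Fin d) ℝ) :
    L22 d X = Matrix.fromBlocks 0 0 0 X := rfl

/-- Van Loan's theorem: the exponential of a block upper-triangular matrix. -/
theorem exp_blockTriangular (d : ℕ) (A C : Matrix (Fin d) (Fin d) ℝ) (t : ℝ) :
    NormedSpace.exp (t • Matrix.fromBlocks A C 0 (-Aᵀ)) =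
      Matrix.fromBlocks (NormedSpace.exp (t • A))
        (NormedSpace.exp (t • A) *
          ∫ s in (0:ℝ)..t,
            NormedSpace.exp ((-s) • A) * C * NormedSpace.exp ((-s) • Aᵀ))
        0 (NormedSpace.exp (t • (-Aᵀ))) := by
  set M : Matrix (Fin d ⊕ Fin d) (Fin d ⊕ Fin d) ℝ := Matrix.fromBlocks A C 0 (-Aᵀ) with hM
  set E : ℝ → Matrix (Fin d) (Fin d) ℝ := fun u => NormedSpace.exp (u • A) with hE
  set F : ℝ → Matrix (Fin d) (Fin d) ℝ := fun u => NormedSpace.exp (u • (-Aᵀ)) with hF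
  set f : ℝ → Matrix (Fin d) (Fin d) ℝ :=
    fun s => NormedSpace.exp ((-s) • A) * C * NormedSpace.exp ((-s) • Aᵀ) with hf
  set Ψ : ℝ → Matrix (Fin d) (Fin d) ℝ := fun u => ∫ s in (0:ℝ)..u, f s with hΨdef
  set Y : ℝ → Matrix (Fin d ⊕ Fin d) (Fin d ⊕ Fin d) ℝ :=
    fun u => Matrix.fromBlocks (E u) (E u * Ψ u) 0 (F u) with hY
  -- continuity of the integrand
  have hfc : Continuous f := by
    have h1 : Continuous fun s : ℝ => NormedSpace.exp ((-s) • A) :=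
      NormedSpace.exp_continuous.comp (continuous_neg.smul continuous_const)
    have h2 : Continuous fun s : ℝ => NormedSpace.exp ((-s) • Aᵀ) :=
      NormedSpace.exp_continuous.comp (continuous_neg.smul continuous_const)
    exact (h1.mul continuous_const).mul h2
  -- derivative of Ψ
  have hΨ : ∀ u : ℝ, HasDerivAt Ψ (f u) u := fun u =>
    intervalIntegral.integral_hasDerivAt_right (hfc.intervalIntegrable _ _)
      (hfc.stronglyMeasurableAtFilter _ _) hfc.continuousAt
  -- E u * f u = C * F u
  have hEf : ∀ u : ℝ, E u * f u = C * F u := by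
    intro u
    have h1 : E u * NormedSpace.exp ((-u) • A) = 1 := by
      rw [hE, ← NormedSpace.exp_add_of_commute
        (((Commute.refl A).smul_left u).smul_right (-u))]
      simp
    have h2 : (-u) • Aᵀ = u • (-Aᵀ) := by rw [smul_neg, neg_smul]
    calc E u * (NormedSpace.exp ((-u) • A) * C * NormedSpace.exp ((-u) • Aᵀ))
        = (E u * NormedSpace.exp ((-u) • A)) * C * NormedSpace.exp ((-u) • Aᵀ) := by
          noncomm_ring
      _ = C * F u := by rw [h1, one_mul, h2, hF]
  -- Y satisfies the linear ODE Y' = M Y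
  have hYD : ∀ u : ℝ, HasDerivAt Y (M * Y u) u := by
    intro u
    have hEd : HasDerivAt E (A * E u) u := hasDerivAt_exp_smul_const' A u
    have hFd : HasDerivAt F ((-Aᵀ) * F u) u := hasDerivAt_exp_smul_const' (-Aᵀ) u
    have hEΨ : HasDerivAt (fun v => E v * Ψ v) (A * E u * Ψ u + E u * f u) u :=
      hEd.mul (hΨ u)
    have hrep : Y = fun v => L11 d (E v) + L12 d (E v * Ψ v) + L22 d (F v) := by
      funext v
      simp only [hY, L11_apply, L12_apply, L22_apply]
      rw [Matrix.fromBlocks_add, Matrix.fromBlocks_add]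
      simp
    have hD : HasDerivAt Y
        (L11 d (A * E u) + L12 d (A * E u * Ψ u + E u * f u) + L22 d ((-Aᵀ) * F u)) u := by
      rw [hrep]
      exact (((L11 d).hasFDerivAt.comp_hasDerivAt u hEd).add
        ((L12 d).hasFDerivAt.comp_hasDerivAt u hEΨ)).add
        ((L22 d).hasFDerivAt.comp_hasDerivAt u hFd)
    convert hD using 1
    rw [hEf u]
    simp only [hY, hM, L11_apply, L12_apply, L22_apply]
    rw [Matrix.fromBlocks_multiply, Matrix.fromBlocks_add, Matrix.fromBlocks_add]
    simp [mul_assoc]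
  -- Z := exp (u • (-M)) * Y u is constant
  set Z : ℝ → Matrix (Fin d ⊕ Fin d) (Fin d ⊕ Fin d) ℝ :=
    fun u => NormedSpace.exp (u • (-M)) * Y u with hZ
  have hZD : ∀ u : ℝ, HasDerivAt Z 0 u := by
    intro u
    have hexp : HasDerivAt (fun v : ℝ => NormedSpace.exp (v • (-M)))
        ((-M) * NormedSpace.exp (u • (-M))) u := hasDerivAt_exp_smul_const' (-M) u
    have hmul := hexp.mul (hYD u)
    have hcomm : NormedSpace.exp (u • (-M)) * M = M * NormedSpace.exp (u • (-M)) :=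
      (((Commute.refl M).neg_left).smul_left u).exp_left
    have h0 : (-M) * NormedSpace.exp (u • (-M)) * Y u +
        NormedSpace.exp (u • (-M)) * (M * Y u) = 0 := by
      have h1 : NormedSpace.exp (u • (-M)) * (M * Y u) =
          M * NormedSpace.exp (u • (-M)) * Y u := by
        rw [← mul_assoc, hcomm]
      rw [h1, neg_mul, neg_mul, neg_add_cancel]
    rw [← h0]
    exact hmul
  have hconst : Z t = Z 0 :=
    is_const_of_deriv_eq_zero (fun u => (hZD u).differentiableAt)
      (fun u => (hZD u).deriv) t 0
  have hY0 : Y 0 = 1 := by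
    simp [hY, hE, hF, hΨdef, Matrix.fromBlocks_one]
  have hZ0 : Z 0 = 1 := by
    simp [hZ, hY0]
  have hZt : NormedSpace.exp (t • (-M)) * Y t = 1 := by
    rw [← hZ0, ← hconst]
  have hinv : NormedSpace.exp (t • M) * NormedSpace.exp (t • (-M)) = 1 := by
    rw [← NormedSpace.exp_add_of_commute (((Commute.refl M).neg_right).smul_left t |>.smul_right t)]
    simp
  calc NormedSpace.exp (t • M)
      = NormedSpace.exp (t • M) * (NormedSpace.exp (t • (-M)) * Y t) := by
        rw [hZt, mul_one]
    _ = (NormedSpace.exp (t • M) * NormedSpace.exp (t • (-M))) * Y t := by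
        rw [mul_assoc]
    _ = Y t := by rw [hinv, one_mul]

end VanLoanAux

/-- The covariance matrix `Σ(h) = ∫₀ʰ exp (A(h−s)) G Gᵀ exp (Aᵀ(h−s)) ds` of the stochastic
increment of the weak Local Linear discretization satisfies
`Σ(h) = (∫₀ʰ exp (A(h−s)) G Gᵀ exp (−Aᵀ s) ds) · exp (Aᵀ h)` and `Σ(h) = D₁₂ · D₁₁ᵀ`, where
`D = exp (h • [[A, GGᵀ], [0, −Aᵀ]])`. -/
theorem covariance_van_loan_formulas (d m : ℕ)
    (A : Matrix (Fin d) (Fin d) ℝ) (G : Matrix (Fin d) (Fin m) ℝ) (h : ℝ) (hh : 0 ≤ h) :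
    (∫ s in (0:ℝ)..h,
        NormedSpace.exp ((h - s) • A) * (G * Gᵀ) * NormedSpace.exp ((h - s) • Aᵀ)) =
      (∫ s in (0:ℝ)..h,
        NormedSpace.exp ((h - s) • A) * (G * Gᵀ) * NormedSpace.exp ((-s) • Aᵀ)) *
        NormedSpace.exp (h • Aᵀ) ∧
    (∫ s in (0:ℝ)..h,
        NormedSpace.exp ((h - s) • A) * (G * Gᵀ) * NormedSpace.exp ((h - s) • Aᵀ)) =
      (NormedSpace.exp (h • Matrix.fromBlocks A (G * Gᵀ) 0 (-Aᵀ))).toBlocks₁₂ *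
        ((NormedSpace.exp (h • Matrix.fromBlocks A (G * Gᵀ) 0 (-Aᵀ))).toBlocks₁₁)ᵀ := by
  set C : Matrix (Fin d) (Fin d) ℝ := G * Gᵀ with hC
  -- continuity facts
  have hc1 : Continuous fun s : ℝ => NormedSpace.exp ((h - s) • A) :=
    NormedSpace.exp_continuous.comp ((continuous_const.sub continuous_id).smul continuous_const)
  have hc2 : Continuous fun s : ℝ => NormedSpace.exp ((-s) • Aᵀ) :=
    NormedSpace.exp_continuous.comp (continuous_neg.smul continuous_const)
  have hc3 : Continuous fun s : ℝ => NormedSpace.exp ((-s) • A) :=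
    NormedSpace.exp_continuous.comp (continuous_neg.smul continuous_const)
  -- first formula
  have key1 : (∫ s in (0:ℝ)..h,
      NormedSpace.exp ((h - s) • A) * C * NormedSpace.exp ((h - s) • Aᵀ)) =
      (∫ s in (0:ℝ)..h,
        NormedSpace.exp ((h - s) • A) * C * NormedSpace.exp ((-s) • Aᵀ)) *
        NormedSpace.exp (h • Aᵀ) := by
    have hpt : ∀ s : ℝ,
        NormedSpace.exp ((h - s) • A) * C * NormedSpace.exp ((h - s) • Aᵀ) =
        (ContinuousLinearMap.mul ℝ (Matrix (Fin d) (Fin d) ℝ)).flip (NormedSpace.exp (h • Aᵀ))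
          (NormedSpace.exp ((h - s) • A) * C * NormedSpace.exp ((-s) • Aᵀ)) := by
      intro s
      have : (h - s) • Aᵀ = (-s) • Aᵀ + h • Aᵀ := by
        rw [neg_smul, sub_smul, neg_add_eq_sub]
      rw [this, NormedSpace.exp_add_of_commute (((Commute.refl Aᵀ).smul_left _).smul_right _)]
      simp [ContinuousLinearMap.flip_apply, ContinuousLinearMap.mul_apply', mul_assoc]
    rw [intervalIntegral.integral_congr (fun s _ => hpt s),
      ContinuousLinearMap.intervalIntegral_comp_comm
        ((ContinuousLinearMap.mul ℝ (Matrix (Fin d) (Fin d) ℝ)).flip (NormedSpace.exp (h • Aᵀ)))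
        (by
          have hI : IntervalIntegrable
              (fun s => NormedSpace.exp ((h - s) • A) * C * NormedSpace.exp ((-s) • Aᵀ)) volume 0 h :=
            ((hc1.mul continuous_const).mul hc2).intervalIntegrable _ _
          exact hI)]
    simp
  -- second formula: pull the constant `exp (h • A)` out on the left
  have key2 : (∫ s in (0:ℝ)..h,
      NormedSpace.exp ((h - s) • A) * C * NormedSpace.exp ((-s) • Aᵀ)) =
      NormedSpace.exp (h • A) *
        ∫ s in (0:ℝ)..h,
          NormedSpace.exp ((-s) • A) * C * NormedSpace.exp ((-s) • Aᵀ) := by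
    have hpt : ∀ s : ℝ,
        NormedSpace.exp ((h - s) • A) * C * NormedSpace.exp ((-s) • Aᵀ) =
        ContinuousLinearMap.mul ℝ (Matrix (Fin d) (Fin d) ℝ) (NormedSpace.exp (h • A))
          (NormedSpace.exp ((-s) • A) * C * NormedSpace.exp ((-s) • Aᵀ)) := by
      intro s
      have : (h - s) • A = h • A + (-s) • A := by
        rw [neg_smul, sub_smul, ← sub_eq_add_neg]
      rw [this, NormedSpace.exp_add_of_commute (((Commute.refl A).smul_left _).smul_right _)]
      simp [ContinuousLinearMap.mul_apply', mul_assoc]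
    rw [intervalIntegral.integral_congr (fun s _ => hpt s),
      ContinuousLinearMap.intervalIntegral_comp_comm
        (ContinuousLinearMap.mul ℝ (Matrix (Fin d) (Fin d) ℝ) (NormedSpace.exp (h • A)))
        (by
          have hI : IntervalIntegrable
              (fun s => NormedSpace.exp ((-s) • A) * C * NormedSpace.exp ((-s) • Aᵀ)) volume 0 h :=
            ((hc3.mul continuous_const).mul hc2).intervalIntegrable _ _
          exact hI)]
    simp
  have hVL := VanLoanAux.exp_blockTriangular d A C h
  have h11 : (NormedSpace.exp (h • Matrix.fromBlocks A C 0 (-Aᵀ))).toBlocks₁₁ =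
      NormedSpace.exp (h • A) := by
    rw [hVL]; exact Matrix.toBlocks_fromBlocks₁₁ _ _ _ _
  have h12 : (NormedSpace.exp (h • Matrix.fromBlocks A C 0 (-Aᵀ))).toBlocks₁₂ =
      NormedSpace.exp (h • A) *
        ∫ s in (0:ℝ)..h,
          NormedSpace.exp ((-s) • A) * C * NormedSpace.exp ((-s) • Aᵀ) := by
    rw [hVL]; exact Matrix.toBlocks_fromBlocks₁₂ _ _ _ _
  have htr : (NormedSpace.exp (h • A))ᵀ = NormedSpace.exp (h • Aᵀ) := by
    rw [← Matrix.exp_transpose, Matrix.transpose_smul]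
  refine ⟨key1, ?_⟩
  rw [key1, key2, h11, h12, htr]
end

section
/- Let A be a real d×d matrix, G a real d×m matrix, and b, f vectors in ℝᵈ, and let C be the (2d+2)×(2d+2) block matrix with block rows [A, GGᵀ, b, f], [0, −Aᵀ, 0, 0], [0, 0, 0, 1], [0, 0, 0, 0] (blocks of sizes d, d, 1, 1). Then for every h ≥ 0, the d×1 block of exp(hC) in block position (1,4) equals ∫₀ʰ exp(A(h−s)) (f + s·b) ds, and the d×d block of exp(hC) in block position (1,1) equals exp(Ah). -/
open Matrix MeasureTheory intervalIntegral
open scoped Matrix.Norms.L2Operator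

section Aux
open NormedSpace

/-- Uniqueness of solutions of the linear matrix ODE `M' = C * M`, `M 0 = 1`. -/
theorem scheme1_exp_unique {𝔸 : Type*} [NormedRing 𝔸] [NormedAlgebra ℝ 𝔸] [CompleteSpace 𝔸]
    (C : 𝔸) (M : ℝ → 𝔸) (hM0 : M 0 = 1)
    (hM : ∀ t, HasDerivAt M (C * M t) t) (t : ℝ) :
    M t = exp (t • C) := by
  have hcomm : ∀ u : ℝ, C * exp (u • C) = exp (u • C) * C := fun u =>
    (((Commute.refl C).smul_right u).exp_right)
  have hconst : ∀ u : ℝ, HasDerivAt (fun v => exp ((-v) • C) * M v) 0 u := by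
    intro u
    have h1 : HasDerivAt (fun v : ℝ => exp ((-v) • C))
        ((-1 : ℝ) • (C * exp ((-u) • C))) u :=
      (hasDerivAt_exp_smul_const' (𝕂 := ℝ) C (-u)).scomp u (hasDerivAt_neg u)
    have h2 := h1.fun_mul (hM u)
    convert h2 using 1
    rw [neg_one_smul, neg_mul, hcomm, mul_assoc]
    abel
  have key : exp ((-t) • C) * M t = 1 := by
    have := is_const_of_deriv_eq_zero (f := fun v => exp ((-v) • C) * M v)
      (fun v => (hconst v).differentiableAt) (fun v => (hconst v).deriv) t 0
    simpa [hM0] using this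
  have hinv : exp (t • C) * exp ((-t) • C) = 1 := by
    letI : NormedAlgebra ℚ 𝔸 := NormedAlgebra.restrictScalars ℚ ℝ 𝔸
    rw [← NormedSpace.exp_add_of_commute (((Commute.refl C).smul_left t).smul_right (-t))]
    simp
  calc M t = (exp (t • C) * exp ((-t) • C)) * M t := by rw [hinv, one_mul]
    _ = exp (t • C) * (exp ((-t) • C) * M t) := mul_assoc _ _ _
    _ = exp (t • C) := by rw [key, mul_one]

/-- A matrix-valued function has a derivative iff all its entries do. -/
theorem scheme1_hasDerivAt_matrix {ι κ : Type*} [Fintype ι] [Fintype κ]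
    [DecidableEq ι] [DecidableEq κ]
    {F : ℝ → Matrix ι κ ℝ} {F' : Matrix ι κ ℝ} {t : ℝ} :
    HasDerivAt F F' t ↔ ∀ i j, HasDerivAt (fun u => F u i j) (F' i j) t := by
  have key : HasDerivAt F F' t ↔
      @HasDerivAt ℝ _ (ι → κ → ℝ) _ _ _ _ F F' t := by
    rw [hasDerivAt_iff_tendsto_slope,
      hasDerivAt_iff_tendsto_slope (F := ι → κ → ℝ) (f := F) (f' := F') (x := t)]
    exact Iff.rfl
  rw [key]
  constructor
  · intro hF i j
    exact (hasDerivAt_pi.1 ((hasDerivAt_pi (φ' := F')).1 hF i)) j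
  · intro hF
    exact (hasDerivAt_pi (φ' := F')).2 fun i => hasDerivAt_pi.2 (hF i)

/-- Derivative of a product of matrix-valued functions. -/
theorem scheme1_hasDerivAt_matMul {ι κ ν : Type*} [Fintype ι] [Fintype κ] [Fintype ν]
    [DecidableEq ι] [DecidableEq κ] [DecidableEq ν]
    {X : ℝ → Matrix ι κ ℝ} {Y : ℝ → Matrix κ ν ℝ}
    {X' : Matrix ι κ ℝ} {Y' : Matrix κ ν ℝ} {t : ℝ}
    (hX : HasDerivAt X X' t) (hY : HasDerivAt Y Y' t) :
    HasDerivAt (fun u => X u * Y u) (X' * Y t + X t * Y') t := by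
  rw [scheme1_hasDerivAt_matrix] at hX hY ⊢
  intro i j
  have hsum := HasDerivAt.fun_sum (u := Finset.univ)
    (A := fun k u => X u i k * Y u k j)
    (A' := fun k => X' i k * Y t k j + X t i k * Y' k j)
    (fun k _ => (hX i k).mul (hY k j))
  simpa [Matrix.mul_apply, Matrix.add_apply, Finset.sum_add_distrib] using hsum

/-- Derivative of `fromBlocks` of matrix-valued functions. -/
theorem scheme1_hasDerivAt_fromBlocks {p q r s : Type*} [Fintype p] [Fintype q] [Fintype r]
    [Fintype s] [DecidableEq p] [DecidableEq q] [DecidableEq r] [DecidableEq s]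
    {W : ℝ → Matrix p r ℝ} {X : ℝ → Matrix p s ℝ}
    {Y : ℝ → Matrix q r ℝ} {Z : ℝ → Matrix q s ℝ}
    {W' : Matrix p r ℝ} {X' : Matrix p s ℝ} {Y' : Matrix q r ℝ} {Z' : Matrix q s ℝ} {t : ℝ}
    (hW : HasDerivAt W W' t) (hX : HasDerivAt X X' t)
    (hY : HasDerivAt Y Y' t) (hZ : HasDerivAt Z Z' t) :
    HasDerivAt (fun u => Matrix.fromBlocks (W u) (X u) (Y u) (Z u))
      (Matrix.fromBlocks W' X' Y' Z') t := by
  rw [scheme1_hasDerivAt_matrix] at hW hX hY hZ ⊢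
  rintro (i | i) (j | j)
  · simpa using hW i j
  · simpa using hX i j
  · simpa using hY i j
  · simpa using hZ i j

variable {d : ℕ}

/-- `E t = exp (t A)`. -/
noncomputable def schemeE (A : Matrix (Fin d) (Fin d) ℝ) : ℝ → Matrix (Fin d) (Fin d) ℝ :=
  fun t => exp (t • A)

theorem schemeE_cont (A : Matrix (Fin d) (Fin d) ℝ) : Continuous (schemeE A) :=
  (letI : NormedAlgebra ℚ (Matrix (Fin d) (Fin d) ℝ) := NormedAlgebra.restrictScalars ℚ ℝ _; exp_continuous).comp (continuous_id.smul continuous_const)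

theorem schemeE_hasDerivAt (A : Matrix (Fin d) (Fin d) ℝ) (t : ℝ) :
    HasDerivAt (schemeE A) (A * schemeE A t) t :=
  hasDerivAt_exp_smul_const' A t

theorem schemeE_zero (A : Matrix (Fin d) (Fin d) ℝ) : schemeE A 0 = 1 := by
  simp [schemeE]

theorem schemeE_mul_neg (A : Matrix (Fin d) (Fin d) ℝ) (t : ℝ) :
    schemeE A t * schemeE A (-t) = 1 := by
  rw [schemeE, schemeE, ← Matrix.exp_add_of_commute _ _ (((Commute.refl A).smul_left t).smul_right (-t))]
  simp [neg_smul]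

theorem schemeE_split (A : Matrix (Fin d) (Fin d) ℝ) (h s : ℝ) :
    exp ((h - s) • A) = schemeE A h * schemeE A (-s) := by
  rw [schemeE, schemeE, ← Matrix.exp_add_of_commute _ _ (((Commute.refl A).smul_left h).smul_right (-s)),
    ← add_smul]
  ring_nf

/-- The entrywise integral `∫ₛ E(-s) R(s) ds`. -/
noncomputable def schemeQ {κ : Type*} (A : Matrix (Fin d) (Fin d) ℝ)
    (R : ℝ → Matrix (Fin d) κ ℝ) : ℝ → Matrix (Fin d) κ ℝ :=
  fun t => Matrix.of fun i j => ∫ s in (0:ℝ)..t, (schemeE A (-s) * R s) i j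

theorem schemeQ_zero {κ : Type*} (A : Matrix (Fin d) (Fin d) ℝ)
    (R : ℝ → Matrix (Fin d) κ ℝ) : schemeQ A R 0 = 0 := by
  ext i j
  simp [schemeQ]

theorem schemeQ_hasDerivAt {κ : Type*} [Fintype κ] [DecidableEq κ]
    (A : Matrix (Fin d) (Fin d) ℝ) {R : ℝ → Matrix (Fin d) κ ℝ} (hR : Continuous R) (t : ℝ) :
    HasDerivAt (schemeQ A R) (schemeE A (-t) * R t) t := by
  have hv : Continuous fun s : ℝ => schemeE A (-s) * R s :=
    ((schemeE_cont A).comp continuous_neg).matrix_mul hR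
  rw [scheme1_hasDerivAt_matrix]
  intro i j
  have hve : Continuous fun s : ℝ => (schemeE A (-s) * R s) i j := hv.matrix_elem i j
  have := intervalIntegral.integral_hasDerivAt_right
    (f := fun s : ℝ => (schemeE A (-s) * R s) i j) (a := 0) (b := t)
    (hve.intervalIntegrable 0 t) (hve.stronglyMeasurableAtFilter volume (nhds t))
    hve.continuousAt
  simpa [schemeQ] using this

/-- Derivative of `t ↦ E t * Q t`: it solves `X' = A X + R`. -/
theorem schemeEQ_hasDerivAt {κ : Type*} [Fintype κ] [DecidableEq κ]
    (A : Matrix (Fin d) (Fin d) ℝ) {R : ℝ → Matrix (Fin d) κ ℝ} (hR : Continuous R) (t : ℝ) :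
    HasDerivAt (fun u => schemeE A u * schemeQ A R u)
      (A * (schemeE A t * schemeQ A R t) + R t) t := by
  have h := scheme1_hasDerivAt_matMul (schemeE_hasDerivAt A t) (schemeQ_hasDerivAt A hR t)
  convert h using 1
  rw [← Matrix.mul_assoc (schemeE A t) (schemeE A (-t)) (R t), schemeE_mul_neg,
    Matrix.one_mul, Matrix.mul_assoc A]

end Aux

open NormedSpace in
/-- The identity `φ_β = D₁₄` of the weak Local Linearization scheme (Scheme1): if `C` is the
`(2d+2) × (2d+2)` block matrix with block rows `[A, GGᵀ, b, f]`, `[0, −Aᵀ, 0, 0]`,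
`[0, 0, 0, 1]`, `[0, 0, 0, 0]` (blocks of sizes `d, d, 1, 1`), then for every `h ≥ 0` the
`d × 1` block of `exp (h C)` in block position `(1,4)` equals
`∫₀ʰ exp (A(h−s)) (f + s b) ds`, and the `d × d` block in position `(1,1)` equals
`exp (A h)`. -/
theorem scheme1_exponential_blocks (d m : ℕ)
    (A : Matrix (Fin d) (Fin d) ℝ) (G : Matrix (Fin d) (Fin m) ℝ) (b f : Fin d → ℝ)
    (C : Matrix ((Fin d ⊕ Fin d) ⊕ (Fin 1 ⊕ Fin 1)) ((Fin d ⊕ Fin d) ⊕ (Fin 1 ⊕ Fin 1)) ℝ)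
    (hC : C = Matrix.fromBlocks
      (Matrix.fromBlocks A (G * Gᵀ) 0 (-Aᵀ))
      (Matrix.fromBlocks (Matrix.of fun i (_ : Fin 1) => b i)
        (Matrix.of fun i (_ : Fin 1) => f i) 0 0)
      0
      (Matrix.fromBlocks 0 1 0 0))
    (h : ℝ) (hh : 0 ≤ h) :
    (NormedSpace.exp (h • C)).toBlocks₁₂.toBlocks₁₂ =
      (Matrix.of fun i (_ : Fin 1) =>
        (∫ s in (0:ℝ)..h, (NormedSpace.exp ((h - s) • A)).mulVec (f + s • b)) i) ∧
    (NormedSpace.exp (h • C)).toBlocks₁₁.toBlocks₁₁ = NormedSpace.exp (h • A) := by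
  classical
  set bcol : Matrix (Fin d) (Fin 1) ℝ := Matrix.of fun i (_ : Fin 1) => b i with hbcol
  set fcol : Matrix (Fin d) (Fin 1) ℝ := Matrix.of fun i (_ : Fin 1) => f i with hfcol
  set R₁ : ℝ → Matrix (Fin d) (Fin d) ℝ := fun s => (G * Gᵀ) * schemeE (-Aᵀ) s with hR₁
  set R₂ : ℝ → Matrix (Fin d) (Fin 1) ℝ := fun _ => bcol with hR₂
  set R₃ : ℝ → Matrix (Fin d) (Fin 1) ℝ := fun s => s • bcol + fcol with hR₃
  have hR₁c : Continuous R₁ := continuous_const.matrix_mul (schemeE_cont (-Aᵀ))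
  have hR₂c : Continuous R₂ := continuous_const
  have hR₃c : Continuous R₃ := by
    rw [hR₃]
    exact Continuous.add (continuous_id.smul continuous_const) continuous_const
  set M : ℝ → Matrix ((Fin d ⊕ Fin d) ⊕ (Fin 1 ⊕ Fin 1))
      ((Fin d ⊕ Fin d) ⊕ (Fin 1 ⊕ Fin 1)) ℝ := fun t =>
    Matrix.fromBlocks
      (Matrix.fromBlocks (schemeE A t) (schemeE A t * schemeQ A R₁ t) 0 (schemeE (-Aᵀ) t))
      (Matrix.fromBlocks (schemeE A t * schemeQ A R₂ t) (schemeE A t * schemeQ A R₃ t) 0 0)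
      0
      (Matrix.fromBlocks 1 (t • 1) 0 1) with hM
  have hM0 : M 0 = 1 := by
    rw [hM]
    simp only [schemeE_zero, schemeQ_zero, Matrix.mul_zero, zero_smul,
      Matrix.fromBlocks_zero]
    rw [Matrix.fromBlocks_one, Matrix.fromBlocks_one, Matrix.fromBlocks_one]
  have hMderiv : ∀ t : ℝ, HasDerivAt M (C * M t) t := by
    intro t
    have hTL := scheme1_hasDerivAt_fromBlocks (schemeE_hasDerivAt A t)
      (schemeEQ_hasDerivAt A hR₁c t) (hasDerivAt_const t 0) (schemeE_hasDerivAt (-Aᵀ) t)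
    have hTR := scheme1_hasDerivAt_fromBlocks (schemeEQ_hasDerivAt A hR₂c t)
      (schemeEQ_hasDerivAt A hR₃c t) (hasDerivAt_const t (0 : Matrix (Fin d) (Fin 1) ℝ))
      (hasDerivAt_const t (0 : Matrix (Fin d) (Fin 1) ℝ))
    have hBL := hasDerivAt_const t (0 : Matrix (Fin 1 ⊕ Fin 1) (Fin d ⊕ Fin d) ℝ)
    have hBR := scheme1_hasDerivAt_fromBlocks (hasDerivAt_const t 1)
      ((hasDerivAt_id' t).smul_const (1 : Matrix (Fin 1) (Fin 1) ℝ))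
      (hasDerivAt_const t (0 : Matrix (Fin 1) (Fin 1) ℝ))
      (hasDerivAt_const t (1 : Matrix (Fin 1) (Fin 1) ℝ))
    have hMd := scheme1_hasDerivAt_fromBlocks hTL hTR hBL hBR
    rw [hM]
    convert hMd using 1
    rw [hC]
    simp only [Matrix.fromBlocks_multiply, Matrix.fromBlocks_add, Matrix.zero_mul,
      Matrix.mul_zero, add_zero, zero_add, Matrix.mul_one, Matrix.one_mul, Matrix.mul_smul,
      one_smul, smul_zero, hR₁, hR₂, hR₃, Matrix.mul_assoc]
  have key : ∀ t : ℝ, M t = exp (t • C) := fun t =>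
    scheme1_exp_unique C M hM0 hMderiv t
  constructor
  · rw [← key h, hM]
    simp only [Matrix.toBlocks_fromBlocks₁₂]
    ext i j
    rw [Matrix.mul_apply, Matrix.of_apply]
    have hw : Continuous fun s : ℝ => (exp ((h - s) • A)).mulVec (f + s • b) :=
      Continuous.matrix_mulVec
        ((letI : NormedAlgebra ℚ (Matrix (Fin d) (Fin d) ℝ) := NormedAlgebra.restrictScalars ℚ ℝ _; exp_continuous).comp ((continuous_const.sub continuous_id).smul continuous_const))
        (continuous_const.add (continuous_id.smul continuous_const))
    have hcont2 : ∀ k : Fin d,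
        Continuous fun s : ℝ => (schemeE A (-s)).mulVec (f + s • b) k := fun k =>
      (continuous_apply k).comp
        (Continuous.matrix_mulVec ((schemeE_cont A).comp continuous_neg)
          (continuous_const.add (continuous_id.smul continuous_const)))
    have step1 : (∫ s in (0:ℝ)..h, (exp ((h - s) • A)).mulVec (f + s • b)) i
        = ∫ s in (0:ℝ)..h, ((exp ((h - s) • A)).mulVec (f + s • b)) i :=
      (ContinuousLinearMap.intervalIntegral_comp_comm
        (ContinuousLinearMap.proj (R := ℝ) (φ := fun _ : Fin d => ℝ) i)
        (hw.intervalIntegrable 0 h)).symm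
    have step2' : ∀ s : ℝ, ((exp ((h - s) • A)).mulVec (f + s • b)) i
        = ∑ k : Fin d, schemeE A h i k * ((schemeE A (-s)).mulVec (f + s • b) k) := by
      intro s
      rw [schemeE_split A h s, ← Matrix.mulVec_mulVec]
      simp [Matrix.mulVec, dotProduct]
    have step3 : ∀ k : Fin d, schemeQ A R₃ h k j
        = ∫ s in (0:ℝ)..h, (schemeE A (-s)).mulVec (f + s • b) k := by
      intro k
      rw [schemeQ, Matrix.of_apply]
      congr 1
      funext s
      simp only [Matrix.mul_apply, Matrix.mulVec, dotProduct, hR₃, Matrix.add_apply,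
        Matrix.smul_apply, hbcol, hfcol, Matrix.of_apply, Pi.add_apply, Pi.smul_apply,
        smul_eq_mul]
      exact Finset.sum_congr rfl fun l _ => by ring
    have e1 : ∀ k : Fin d, schemeE A h i k * schemeQ A R₃ h k j
        = ∫ s in (0:ℝ)..h, schemeE A h i k * ((schemeE A (-s)).mulVec (f + s • b) k) := by
      intro k
      rw [step3 k, intervalIntegral.integral_const_mul]
    rw [step1, Finset.sum_congr rfl (fun k _ => e1 k), ← intervalIntegral.integral_finset_sum
      (fun k _ => ((continuous_const.fun_mul (hcont2 k)).intervalIntegrable 0 h))]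
    congr 1
    funext s
    exact (step2' s).symm
  · rw [← key h, hM]
    simp only [Matrix.toBlocks_fromBlocks₁₁]
    rfl
end

section
/- Let K, M, L > 0, β ≥ 1 a natural number, A a real d×d matrix with ‖A‖ ≤ K, h ≥ 0, and let G, G̃ : [0,h] → M_{d×m}(ℝ) be continuous with ‖G(s)‖ ≤ M, ‖G̃(s)‖ ≤ M, and ‖G(s) − G̃(s)‖ ≤ L s^β for all s ∈ [0,h]. Then ‖∫₀ʰ exp(A(h−s)) (G(s)G(s)ᵀ − G̃(s)G̃(s)ᵀ) exp(Aᵀ(h−s)) ds‖ ≤ 2 M L e^{2Kh} h^{β+1}. -/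
open Matrix MeasureTheory intervalIntegral
open scoped Matrix.Norms.L2Operator

lemma aux_matrix_norm_one_le (d : ℕ) : ‖(1 : Matrix (Fin d) (Fin d) ℝ)‖ ≤ 1 := by
  rw [Matrix.cstar_norm_def, _root_.map_one]
  exact ContinuousLinearMap.norm_id_le

lemma aux_matrix_norm_pow_le (d : ℕ) (X : Matrix (Fin d) (Fin d) ℝ) (n : ℕ) :
    ‖X ^ n‖ ≤ ‖X‖ ^ n := by
  induction n with
  | zero => simpa using aux_matrix_norm_one_le d
  | succ n ih =>
    calc ‖X ^ (n + 1)‖ = ‖X ^ n * X‖ := by rw [pow_succ]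
      _ ≤ ‖X ^ n‖ * ‖X‖ := norm_mul_le _ _
      _ ≤ ‖X‖ ^ n * ‖X‖ := by
          exact mul_le_mul_of_nonneg_right ih (norm_nonneg _)
      _ = ‖X‖ ^ (n + 1) := (pow_succ _ _).symm

lemma aux_norm_exp_le (d : ℕ) (X : Matrix (Fin d) (Fin d) ℝ) :
    ‖NormedSpace.exp X‖ ≤ Real.exp ‖X‖ := by
  rw [NormedSpace.exp_eq_tsum (𝕂 := ℝ)]
  have hsum : Summable fun n : ℕ => ‖(n.factorial : ℝ)⁻¹ • X ^ n‖ := by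
    refine Summable.of_nonneg_of_le (fun n => norm_nonneg _) (fun n => ?_)
      (Real.summable_pow_div_factorial ‖X‖)
    rw [norm_smul, norm_inv, Real.norm_natCast, div_eq_inv_mul]
    exact mul_le_mul_of_nonneg_left (aux_matrix_norm_pow_le d X n) (by positivity)
  refine (norm_tsum_le_tsum_norm hsum).trans ?_
  have hexp : Real.exp ‖X‖ = ∑' n : ℕ, ‖X‖ ^ n / (n.factorial : ℝ) := by
    rw [Real.exp_eq_exp_ℝ, NormedSpace.exp_eq_tsum_div]
  rw [hexp]
  refine Summable.tsum_le_tsum (fun n => ?_) hsum (Real.summable_pow_div_factorial ‖X‖)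
  rw [norm_smul, norm_inv, Real.norm_natCast, div_eq_inv_mul]
  exact mul_le_mul_of_nonneg_left (aux_matrix_norm_pow_le d X n) (by positivity)

/-- Estimate for the covariance error caused by replacing the diffusion coefficient `G` by its
truncated Taylor polynomial `G̃`: if `‖A‖ ≤ K`, `‖G(s)‖, ‖G̃(s)‖ ≤ M` and
`‖G(s) − G̃(s)‖ ≤ L s^β` on `[0, h]`, then
`‖∫₀ʰ exp (A(h−s)) (G Gᵀ − G̃ G̃ᵀ)(s) exp (Aᵀ(h−s)) ds‖ ≤ 2 M L e^{2Kh} h^{β+1}`. -/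
theorem taylor_truncation_covariance_error (d m : ℕ) (K M L : ℝ)
    (hK : 0 < K) (hM : 0 < M) (hL : 0 < L) (β : ℕ) (hβ : 1 ≤ β)
    (A : Matrix (Fin d) (Fin d) ℝ) (hA : ‖A‖ ≤ K) (h : ℝ) (hh : 0 ≤ h)
    (G Gt : ℝ → Matrix (Fin d) (Fin m) ℝ)
    (hGc : ContinuousOn G (Set.Icc 0 h)) (hGtc : ContinuousOn Gt (Set.Icc 0 h))
    (hGb : ∀ s ∈ Set.Icc (0:ℝ) h, ‖G s‖ ≤ M)
    (hGtb : ∀ s ∈ Set.Icc (0:ℝ) h, ‖Gt s‖ ≤ M)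
    (hdiff : ∀ s ∈ Set.Icc (0:ℝ) h, ‖G s - Gt s‖ ≤ L * s ^ β) :
    ‖∫ s in (0:ℝ)..h,
        NormedSpace.exp ((h - s) • A) * (G s * (G s)ᵀ - Gt s * (Gt s)ᵀ) *
          NormedSpace.exp ((h - s) • Aᵀ)‖ ≤
      2 * M * L * Real.exp (2 * K * h) * h ^ (β + 1) := by
  have hAt : ‖Aᵀ‖ ≤ K := by
    rw [← Matrix.conjTranspose_eq_transpose_of_trivial, Matrix.l2_opNorm_conjTranspose]
    exact hA
  have key : ∀ s ∈ Set.uIoc (0:ℝ) h,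
      ‖NormedSpace.exp ((h - s) • A) * (G s * (G s)ᵀ - Gt s * (Gt s)ᵀ) *
          NormedSpace.exp ((h - s) • Aᵀ)‖ ≤
        2 * M * L * Real.exp (2 * K * h) * h ^ β := by
    intro s hs
    rw [Set.uIoc_of_le hh] at hs
    have hs0 : (0:ℝ) ≤ s := hs.1.le
    have hsh : s ≤ h := hs.2
    have hsIcc : s ∈ Set.Icc (0:ℝ) h := ⟨hs0, hsh⟩
    have hhs : 0 ≤ h - s := by linarith
    -- exponential factors
    have hexpA : ‖NormedSpace.exp ((h - s) • A)‖ ≤ Real.exp (K * h) := by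
      refine (aux_norm_exp_le d _).trans (Real.exp_le_exp.mpr ?_)
      rw [norm_smul, Real.norm_of_nonneg hhs]
      calc (h - s) * ‖A‖ ≤ (h - s) * K := by
            exact mul_le_mul_of_nonneg_left hA hhs
        _ ≤ h * K := by nlinarith
        _ = K * h := mul_comm _ _
    have hexpAt : ‖NormedSpace.exp ((h - s) • Aᵀ)‖ ≤ Real.exp (K * h) := by
      refine (aux_norm_exp_le d _).trans (Real.exp_le_exp.mpr ?_)
      rw [norm_smul, Real.norm_of_nonneg hhs]
      calc (h - s) * ‖Aᵀ‖ ≤ (h - s) * K := by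
            exact mul_le_mul_of_nonneg_left hAt hhs
        _ ≤ h * K := by nlinarith
        _ = K * h := mul_comm _ _
    -- middle factor
    have hdiffT : ‖(G s - Gt s)ᵀ‖ ≤ L * s ^ β := by
      rw [← Matrix.conjTranspose_eq_transpose_of_trivial, Matrix.l2_opNorm_conjTranspose]
      exact hdiff s hsIcc
    have hGtT : ‖(Gt s)ᵀ‖ ≤ M := by
      rw [← Matrix.conjTranspose_eq_transpose_of_trivial, Matrix.l2_opNorm_conjTranspose]
      exact hGtb s hsIcc
    have hsβ : s ^ β ≤ h ^ β := pow_le_pow_left₀ hs0 hsh β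
    have hmid : ‖G s * (G s)ᵀ - Gt s * (Gt s)ᵀ‖ ≤ 2 * M * L * h ^ β := by
      have hsplit : G s * (G s)ᵀ - Gt s * (Gt s)ᵀ
          = G s * (G s - Gt s)ᵀ + (G s - Gt s) * (Gt s)ᵀ := by
        rw [Matrix.transpose_sub, Matrix.mul_sub, Matrix.sub_mul]
        abel
      rw [hsplit]
      have h1 : ‖G s * (G s - Gt s)ᵀ‖ ≤ M * (L * s ^ β) := by
        refine (Matrix.l2_opNorm_mul _ _).trans ?_
        exact mul_le_mul (hGb s hsIcc) hdiffT (norm_nonneg _) hM.le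
      have h2 : ‖(G s - Gt s) * (Gt s)ᵀ‖ ≤ L * s ^ β * M := by
        refine (Matrix.l2_opNorm_mul _ _).trans ?_
        exact mul_le_mul (hdiff s hsIcc) hGtT (norm_nonneg _) (by positivity)
      calc ‖G s * (G s - Gt s)ᵀ + (G s - Gt s) * (Gt s)ᵀ‖
          ≤ ‖G s * (G s - Gt s)ᵀ‖ + ‖(G s - Gt s) * (Gt s)ᵀ‖ := norm_add_le _ _
        _ ≤ M * (L * s ^ β) + L * s ^ β * M := add_le_add h1 h2
        _ = 2 * M * L * s ^ β := by ring
        _ ≤ 2 * M * L * h ^ β := by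
            exact mul_le_mul_of_nonneg_left hsβ (by positivity)
    calc ‖NormedSpace.exp ((h - s) • A) * (G s * (G s)ᵀ - Gt s * (Gt s)ᵀ) *
            NormedSpace.exp ((h - s) • Aᵀ)‖
        ≤ ‖NormedSpace.exp ((h - s) • A) * (G s * (G s)ᵀ - Gt s * (Gt s)ᵀ)‖ *
            ‖NormedSpace.exp ((h - s) • Aᵀ)‖ := Matrix.l2_opNorm_mul _ _
      _ ≤ ‖NormedSpace.exp ((h - s) • A)‖ * ‖G s * (G s)ᵀ - Gt s * (Gt s)ᵀ‖ *
            ‖NormedSpace.exp ((h - s) • Aᵀ)‖ := by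
          refine mul_le_mul_of_nonneg_right ?_ (norm_nonneg _)
          exact Matrix.l2_opNorm_mul _ _
      _ ≤ Real.exp (K * h) * (2 * M * L * h ^ β) * Real.exp (K * h) := by
          refine mul_le_mul (mul_le_mul hexpA hmid (norm_nonneg _) (Real.exp_nonneg _))
            hexpAt (norm_nonneg _) (by positivity)
      _ = 2 * M * L * Real.exp (2 * K * h) * h ^ β := by
          rw [show (2:ℝ) * K * h = K * h + K * h by ring, Real.exp_add]; ring
  have := intervalIntegral.norm_integral_le_of_norm_le_const key
  calc ‖∫ s in (0:ℝ)..h,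
        NormedSpace.exp ((h - s) • A) * (G s * (G s)ᵀ - Gt s * (Gt s)ᵀ) *
          NormedSpace.exp ((h - s) • Aᵀ)‖
      ≤ 2 * M * L * Real.exp (2 * K * h) * h ^ β * |h - 0| := this
    _ = 2 * M * L * Real.exp (2 * K * h) * h ^ (β + 1) := by
        rw [sub_zero, abs_of_nonneg hh, pow_succ]; ring
end
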